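/- Let C and D be categories with finite products and L ⊣ R: D ⇄ C an adjunction satisfying Frobenius reciprocity. Then for any object S of C, the adjunction extends contravariantly to an adjunction between the full subcategory of presheaves on D of the form (RS)^W and the full subcategory of presheaves on C of the form S^X, with unit given by S^ε and counit by R S^η, where η and ε are the unit and counit of L ⊣ R. -/

import Mathlib

open CategoryTheory CategoryTheory.Limits

universe u v

variable {C : Type u} [Category.{v} C] [HasFiniteProducts C]


/-- The presheaf `S^X : Y ↦ C(Y × X, S)`. -/
noncomputable def pow (S X : C) : Cᵒᵖ ⥤ Type v where
  obj Z := (Opposite.unop Z ⨯ X) ⟶ S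
  map f := TypeCat.ofHom (fun u => prod.map f.unop (𝟙 X) ≫ u)
  map_id Z := by ext u; simp
  map_comp f g := by
    ext u
    show prod.map ((f ≫ g).unop) (𝟙 X) ≫ u
      = prod.map g.unop (𝟙 X) ≫ prod.map f.unop (𝟙 X) ≫ u
    rw [← Category.assoc, prod.map_map]; simp

/-- Contravariant action `S^f : S^Y ⟶ S^X` for `f : X ⟶ Y`. -/
noncomputable def powMap (S : C) {X Y : C} (f : X ⟶ Y) : pow S Y ⟶ pow S X where
  app Z := TypeCat.ofHom (fun u => prod.map (𝟙 _) f ≫ u)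
  naturality Z W g := by
    ext u
    change (Opposite.unop Z ⨯ Y ⟶ S) at u
    show prod.map (𝟙 _) f ≫ prod.map g.unop (𝟙 Y) ≫ u
      = prod.map g.unop (𝟙 X) ≫ prod.map (𝟙 _) f ≫ u
    rw [← Category.assoc, ← Category.assoc, prod.map_map, prod.map_map]
    simp

@[simp] lemma powMap_id (S X : C) : powMap S (𝟙 X) = 𝟙 (pow S X) := by
  ext Z u; simp [powMap, pow] <;> rfl

@[simp] lemma powMap_comp (S : C) {X Y Z : C} (f : X ⟶ Y) (g : Y ⟶ Z) :
    powMap S (f ≫ g) = powMap S g ≫ powMap S f := by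
  ext W u
  change (Opposite.unop W ⨯ Z ⟶ S) at u
  show prod.map (𝟙 _) (f ≫ g) ≫ u = prod.map (𝟙 _) f ≫ prod.map (𝟙 _) g ≫ u
  rw [← Category.assoc, prod.map_map]; simp

variable {D : Type u} [Category.{v} D] [HasFiniteProducts D]

/-- The canonical Frobenius comparison map `L(R(X) × W) ⟶ X × LW`. -/
noncomputable def frobeniusMap (L : D ⥤ C) (R : C ⥤ D) (adj : L ⊣ R) (W : D) (X : C) :
    L.obj (R.obj X ⨯ W) ⟶ X ⨯ L.obj W :=
  prod.lift (L.map prod.fst ≫ adj.counit.app X) (L.map prod.snd)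

/-- The full subcategory of presheaves on `C` of the form `S^X`. -/
def PowSubcat (S : C) : Type _ :=
  ObjectProperty.FullSubcategory (fun F : Cᵒᵖ ⥤ Type v => ∃ X : C, Nonempty (F ≅ pow S X))

instance (S : C) : Category (PowSubcat S) :=
  ObjectProperty.FullSubcategory.category _

section Aux

variable (L : D ⥤ C) (R : C ⥤ D) (adj : L ⊣ R)

lemma frob_nat_W {W W' : D} (g : W' ⟶ W) (X : C) :
    L.map (prod.map (𝟙 (R.obj X)) g) ≫ frobeniusMap L R adj W X
      = frobeniusMap L R adj W' X ≫ prod.map (𝟙 X) (L.map g) := by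
  apply Limits.prod.hom_ext
  · simp only [frobeniusMap, Category.assoc, prod.lift_fst, prod.map_fst, Category.comp_id,
      prod.lift_fst_assoc]
    rw [← L.map_comp_assoc, prod.map_fst, Category.comp_id]
  · simp only [frobeniusMap, Category.assoc, prod.lift_snd, prod.map_snd, prod.lift_snd_assoc]
    rw [← L.map_comp, prod.map_snd, L.map_comp]

lemma frob_nat_X {X X' : C} (f : X' ⟶ X) (W : D) :
    L.map (prod.map (R.map f) (𝟙 W)) ≫ frobeniusMap L R adj W X
      = frobeniusMap L R adj W X' ≫ prod.map f (𝟙 (L.obj W)) := by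
  apply Limits.prod.hom_ext
  · simp only [frobeniusMap, Category.assoc, prod.lift_fst, prod.map_fst, ← L.map_comp_assoc,
      prod.map_fst]
    rw [L.map_comp, Category.assoc, adj.counit_naturality, prod.lift_fst_assoc,
      Category.assoc]
  · simp only [frobeniusMap, Category.assoc, prod.lift_snd, prod.map_snd, Category.comp_id]
    rw [← L.map_comp, prod.map_snd, Category.comp_id]

variable (frob : ∀ (W : D) (X : C), IsIso (frobeniusMap L R adj W X)) (S : C)

/-- The equivalence `D(R X ⨯ W, R S) ≃ C(X ⨯ L W, S)` coming from Frobenius reciprocity. -/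
noncomputable def frobEquiv (W : D) (X : C) :
    (R.obj X ⨯ W ⟶ R.obj S) ≃ (X ⨯ L.obj W ⟶ S) :=
  haveI := frob W X
  (adj.homEquiv _ _).symm.trans
    (Iso.homCongr (asIso (frobeniusMap L R adj W X)) (Iso.refl S))

lemma frobEquiv_apply (W : D) (X : C) (v : R.obj X ⨯ W ⟶ R.obj S) :
    frobEquiv L R adj frob S W X v
      = (haveI := frob W X; inv (frobeniusMap L R adj W X)) ≫ (adj.homEquiv _ _).symm v := by
  simp [frobEquiv]

/-- `(RS)^W ∘ R ≅ S^{LW}`. -/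
noncomputable def powPullbackR (W : D) : R.op ⋙ pow (R.obj S) W ≅ pow S (L.obj W) := by
  refine NatIso.ofComponents
    (fun X => (frobEquiv L R adj frob S W X.unop).toIso) (fun {X X'} f => ?_)
  ext v
  change (R.obj X.unop ⨯ W ⟶ R.obj S) at v
  show frobEquiv L R adj frob S W X'.unop (prod.map (R.map f.unop) (𝟙 W) ≫ v)
      = prod.map f.unop (𝟙 (L.obj W)) ≫ frobEquiv L R adj frob S W X.unop v
  haveI := frob W X.unop
  haveI := frob W X'.unop
  rw [frobEquiv_apply, frobEquiv_apply, adj.homEquiv_naturality_left_symm]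
  rw [← Category.assoc, ← Category.assoc]
  congr 1
  rw [IsIso.inv_comp_eq, ← Category.assoc, ← frob_nat_X L R adj f.unop W]
  simp

/-- `S^X ∘ L ≅ (RS)^{RX}`. -/
noncomputable def powPullbackL (X : C) : L.op ⋙ pow S X ≅ pow (R.obj S) (R.obj X) := by
  refine NatIso.ofComponents
    (fun W =>
      ((Iso.homCongr (prod.braiding (L.obj W.unop) X) (Iso.refl S)).trans
        (((frobEquiv L R adj frob S W.unop X).symm).trans
          (Iso.homCongr (prod.braiding (R.obj X) W.unop) (Iso.refl (R.obj S))))).toIso)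
    (fun {W W'} g => ?_)
  ext u
  change (L.obj W.unop ⨯ X ⟶ S) at u
  show (prod.braiding (R.obj X) W'.unop).inv ≫ (frobEquiv L R adj frob S W'.unop X).symm
        ((prod.braiding (L.obj W'.unop) X).inv ≫ (prod.map (L.map g.unop) (𝟙 X) ≫ u) ≫ 𝟙 S)
        ≫ 𝟙 (R.obj S)
      = prod.map g.unop (𝟙 (R.obj X)) ≫ ((prod.braiding (R.obj X) W.unop).inv ≫
        (frobEquiv L R adj frob S W.unop X).symm ((prod.braiding (L.obj W.unop) X).inv ≫ u ≫ 𝟙 S)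
        ≫ 𝟙 (R.obj S))
  simp only [Functor.comp_obj, Functor.comp_map, types_comp_apply, Equiv.toIso_hom,
    Equiv.trans_apply, Iso.homCongr_apply, Iso.refl_hom, Category.comp_id, pow,
    Functor.op_obj, Functor.op_map, Quiver.Hom.unop_op]
  have hsymm : ∀ (V : D) (w : L.obj V ⨯ X ⟶ S),
      (frobEquiv L R adj frob S V X).symm ((prod.braiding (L.obj V) X).inv ≫ w)
        = adj.homEquiv _ _ (frobeniusMap L R adj V X ≫ (prod.braiding (L.obj V) X).inv ≫ w) := by
    intro V w
    apply (frobEquiv L R adj frob S V X).injective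
    rw [Equiv.apply_symm_apply, frobEquiv_apply]
    haveI := frob V X
    rw [Equiv.symm_apply_apply, ← Category.assoc, IsIso.inv_hom_id, Category.id_comp]
  rw [hsymm, hsymm]
  have hb : (prod.braiding (L.obj W'.unop) X).inv ≫ prod.map (L.map g.unop) (𝟙 X)
      = prod.map (𝟙 X) (L.map g.unop) ≫ (prod.braiding (L.obj W.unop) X).inv := by
    apply Limits.prod.hom_ext <;> simp
  rw [← Category.assoc (prod.braiding (L.obj W'.unop) X).inv, hb]
  rw [Category.assoc, ← Category.assoc (frobeniusMap L R adj W'.unop X),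
    ← frob_nat_W L R adj g.unop X, Category.assoc, adj.homEquiv_naturality_left]
  conv_lhs => rw [← Category.assoc]
  conv_rhs => rw [← Category.assoc]
  congr 1
  apply Limits.prod.hom_ext <;> simp

end Aux

/-- An adjunction `L ⊣ R` between categories with finite products satisfying Frobenius
reciprocity extends contravariantly to an adjunction between the full subcategories of
presheaves of the form `(RS)^W` (on `D`) and of the form `S^X` (on `C`), with
`S^X ↦ (RS)^{RX}` and `(RS)^W ↦ S^{LW}`. -/
theorem frobenius_double_power_adjunction (L : D ⥤ C) (R : C ⥤ D) (adj : L ⊣ R)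
    (frob : ∀ (W : D) (X : C), IsIso (frobeniusMap L R adj W X)) (S : C) :
    ∃ (Φ : PowSubcat S ⥤ PowSubcat (R.obj S)) (Ψ : PowSubcat (R.obj S) ⥤ PowSubcat S)
      (adj2 : Φ ⊣ Ψ),
      (∀ (P : PowSubcat S) (X : C), Nonempty (P.obj ≅ pow S X) →
        Nonempty ((Φ.obj P).obj ≅ pow (R.obj S) (R.obj X))) ∧
      (∀ (Q : PowSubcat (R.obj S)) (W : D), Nonempty (Q.obj ≅ pow (R.obj S) W) →
        Nonempty ((Ψ.obj Q).obj ≅ pow S (L.obj W))) := by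
  classical
  let Lstar : (Cᵒᵖ ⥤ Type v) ⥤ (Dᵒᵖ ⥤ Type v) := (Functor.whiskeringLeft Dᵒᵖ Cᵒᵖ (Type v)).obj L.op
  let Rstar : (Dᵒᵖ ⥤ Type v) ⥤ (Cᵒᵖ ⥤ Type v) := (Functor.whiskeringLeft Cᵒᵖ Dᵒᵖ (Type v)).obj R.op
  have hΦ : ∀ P : PowSubcat S,
      ∃ W : D, Nonempty (Lstar.obj ((ObjectProperty.ι _).obj P) ≅ pow (R.obj S) W) := by
    rintro ⟨F, X, ⟨i⟩⟩
    exact ⟨R.obj X, ⟨Functor.isoWhiskerLeft L.op i ≪≫ powPullbackL L R adj frob S X⟩⟩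
  have hΨ : ∀ Q : PowSubcat (R.obj S),
      ∃ X : C, Nonempty (Rstar.obj ((ObjectProperty.ι _).obj Q) ≅ pow S X) := by
    rintro ⟨G, W, ⟨i⟩⟩
    exact ⟨L.obj W, ⟨Functor.isoWhiskerLeft R.op i ≪≫ powPullbackR L R adj frob S W⟩⟩
  let Φ : PowSubcat S ⥤ PowSubcat (R.obj S) :=
    ObjectProperty.lift _ (ObjectProperty.ι _ ⋙ Lstar) hΦ
  let Ψ : PowSubcat (R.obj S) ⥤ PowSubcat S :=
    ObjectProperty.lift _ (ObjectProperty.ι _ ⋙ Rstar) hΨ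
  have bigAdj : Lstar ⊣ Rstar :=
    Adjunction.whiskerLeft (Type v) (Adjunction.op adj)
  refine ⟨Φ, Ψ,
    bigAdj.restrictFullyFaithful
      (Functor.FullyFaithful.ofFullyFaithful (ObjectProperty.ι _))
      (Functor.FullyFaithful.ofFullyFaithful (ObjectProperty.ι _))
      (ObjectProperty.liftCompιIso _ _ _).symm
      (ObjectProperty.liftCompιIso _ _ _).symm, ?_, ?_⟩
  · rintro P X ⟨i⟩
    exact ⟨Functor.isoWhiskerLeft L.op i ≪≫ powPullbackL L R adj frob S X⟩
  · rintro Q W ⟨i⟩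
    exact ⟨Functor.isoWhiskerLeft R.op i ≪≫ powPullbackR L R adj frob S W⟩
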